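/- Let $z: [0,2\pi] \to \mathbb{R}^2$ be a $C^2$ curve with $z_\phi(\phi) \neq 0$ for all $\phi$, and let $\nu = z_\phi^\perp / |z_\phi^\perp|$ where $(a,b)^\perp := (b,-a)$. Let $u: \mathbb{R}^2 \to \mathbb{C}$ be $C^2$ and define $G(z)(\phi) := \nu(\phi)\cdot\nabla u(z(\phi))$. Then for a $C^2$ perturbation $h: [0,2\pi]\to\mathbb{R}^2$, the first-order (Gâteaux) derivative of $G$ at $z$ in direction $h$ is $G'(z)h = \frac{1}{|z_\phi|}\left((I-\nu\nu^\top)h_\phi^\perp\right)\cdot\nabla u(z) + \nu\cdot\left(\nabla\nabla^\top u(z)\,h\right)$, i.e., $\frac{d}{dt}\Big|_{t=0} G(z+th)(\phi)$ equals this expression for each $\phi$. -/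

import Mathlib

noncomputable section

/-- The rotation `(a,b) ↦ (b,-a)` on `ℝ²` (so that `ν = z_φ^⊥/|z_φ^⊥|` is the exterior
normal of a positively oriented curve). -/
def perp (v : EuclideanSpace ℝ (Fin 2)) : EuclideanSpace ℝ (Fin 2) :=
  (EuclideanSpace.equiv (Fin 2) ℝ).symm ![v 1, -v 0]

/-- The unit normal `ν = z_φ^⊥ / |z_φ^⊥|` of a parameterized plane curve `z` at `φ`. -/
def curveNormal (z : ℝ → EuclideanSpace ℝ (Fin 2)) (φ : ℝ) : EuclideanSpace ℝ (Fin 2) :=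
  ‖perp (deriv z φ)‖⁻¹ • perp (deriv z φ)

/-- First partial derivative `∂_i u` of `u : ℝ² → ℂ`. -/
def partial1 (u : EuclideanSpace ℝ (Fin 2) → ℂ) (x : EuclideanSpace ℝ (Fin 2)) (i : Fin 2) : ℂ :=
  fderiv ℝ u x (EuclideanSpace.single i 1)

/-- Second partial derivative `∂_i ∂_j u` of `u : ℝ² → ℂ` (Hessian entry). -/
def partial2 (u : EuclideanSpace ℝ (Fin 2) → ℂ) (x : EuclideanSpace ℝ (Fin 2)) (i j : Fin 2) : ℂ :=
  fderiv ℝ (fun y => fderiv ℝ u y (EuclideanSpace.single j 1)) x (EuclideanSpace.single i 1)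

/-- The boundary operator `G(z)(φ) = ν(φ)·∇u(z(φ))` for a plane curve `z`. -/
def bdryOp (u : EuclideanSpace ℝ (Fin 2) → ℂ) (z : ℝ → EuclideanSpace ℝ (Fin 2)) (φ : ℝ) : ℂ :=
  ∑ i : Fin 2, ((curveNormal z φ i : ℝ) : ℂ) * partial1 u (z φ) i


lemma perp_add_smul (a b : EuclideanSpace ℝ (Fin 2)) (t : ℝ) :
    perp (a + t • b) = perp a + t • perp b := by
  ext i
  fin_cases i <;> (simp [perp, PiLp.add_apply, PiLp.smul_apply, smul_eq_mul]; try ring)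

lemma norm_perp (v : EuclideanSpace ℝ (Fin 2)) : ‖perp v‖ = ‖v‖ := by
  simp only [EuclideanSpace.norm_eq, Fin.sum_univ_two]
  congr 1
  show ‖v 1‖^2 + ‖-v 0‖^2 = ‖v 0‖^2 + ‖v 1‖^2
  simp [norm_neg]; ring

lemma single_decomp (x : EuclideanSpace ℝ (Fin 2)) :
    x = x 0 • EuclideanSpace.single (0 : Fin 2) (1:ℝ) + x 1 • EuclideanSpace.single (1 : Fin 2) (1:ℝ) := by
  ext i
  fin_cases i <;> simp [EuclideanSpace.single_apply]

lemma hasDerivAt_norm_line (A B : EuclideanSpace ℝ (Fin 2)) (hA : A ≠ 0) :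
    HasDerivAt (fun t : ℝ => ‖A + t • B‖) ((inner ℝ A B : ℝ) / ‖A‖) 0 := by
  set r := ‖A‖ with hr
  have hr0 : 0 < r := norm_pos_iff.mpr hA
  set ip : ℝ := inner ℝ A B with hip
  have hQ : ∀ t : ℝ, ‖A + t • B‖ = Real.sqrt (r^2 + (2*ip)*t + ‖B‖^2 * t^2) := by
    intro t
    have : (inner ℝ (A + t • B) (A + t • B) : ℝ) = r^2 + (2*ip)*t + ‖B‖^2 * t^2 := by
      rw [real_inner_add_add_self]
      simp only [real_inner_smul_left, real_inner_smul_right]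
      rw [real_inner_self_eq_norm_sq, real_inner_self_eq_norm_sq, ← hip, ← hr]
      ring
    rw [← Real.sqrt_sq (norm_nonneg _), ← real_inner_self_eq_norm_sq, this]
  have hpoly : HasDerivAt (fun t : ℝ => r^2 + (2*ip)*t + ‖B‖^2 * t^2) (2*ip) 0 := by
    have h1 : HasDerivAt (fun t : ℝ => r^2 + (2*ip)*t + ‖B‖^2 * t^2)
        (0 + (2*ip)*1 + ‖B‖^2 * (2 * 0^1)) 0 :=
      ((hasDerivAt_const 0 (r^2)).add ((hasDerivAt_id 0).const_mul (2*ip))).add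
        ((hasDerivAt_pow 2 0).const_mul (‖B‖^2))
    simpa using h1
  have hQ0 : r^2 + (2*ip)*0 + ‖B‖^2 * 0^2 ≠ 0 := by simpa using (by positivity : r^2 ≠ 0)
  have hcomp := (Real.hasDerivAt_sqrt hQ0).comp 0 hpoly
  have heq : (fun t : ℝ => ‖A + t • B‖)
      = (Real.sqrt ∘ fun t : ℝ => r^2 + (2*ip)*t + ‖B‖^2 * t^2) := funext fun t => hQ t
  rw [heq]
  refine hcomp.congr_deriv ?_
  have : Real.sqrt (r^2 + (2*ip)*0 + ‖B‖^2 * 0^2) = r := by simpa using Real.sqrt_sq hr0.le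
  rw [this]; field_simp


/-- Theorem 3.1 of the paper: for a `C²` plane curve `z` with `z_φ ≠ 0`,
`ν = z_φ^⊥/|z_φ^⊥|`, a `C²` function `u : ℝ² → ℂ`, `G(z)(φ) = ν·∇u(z(φ))`, and a `C²`
perturbation `h`, the Gâteaux derivative `d/dt|_{t=0} G(z+th)(φ)` equals
`(1/|z_φ|)((I-ννᵀ)h_φ^⊥)·∇u(z) + ν·(∇∇ᵀu(z) h)` at each `φ`. -/
theorem boundary_operator_gateaux_deriv_2D
    (z h : ℝ → EuclideanSpace ℝ (Fin 2)) (hz : ContDiff ℝ 2 z) (hh : ContDiff ℝ 2 h)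
    (hz' : ∀ φ : ℝ, deriv z φ ≠ 0)
    (u : EuclideanSpace ℝ (Fin 2) → ℂ) (hu : ContDiff ℝ 2 u) (φ : ℝ) :
    HasDerivAt (fun t : ℝ => bdryOp u (fun s => z s + t • h s) φ)
      ((∑ i : Fin 2,
          (((‖deriv z φ‖⁻¹ •
                (perp (deriv h φ) -
                  (inner ℝ (curveNormal z φ) (perp (deriv h φ)) : ℝ) • curveNormal z φ)) i : ℝ) : ℂ) *
            partial1 u (z φ) i) +
        ∑ i : Fin 2, ((curveNormal z φ i : ℝ) : ℂ) *
          ∑ j : Fin 2, partial2 u (z φ) i j * ((h φ j : ℝ) : ℂ)) 0 := by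
  have one_le : (1 : WithTop ℕ∞) ≤ 2 := one_le_two
  set a := deriv z φ with ha
  set b := deriv h φ with hb
  set A := perp a with hA
  set B := perp b with hB
  have hAne : A ≠ 0 := by
    intro hc
    exact hz' φ (norm_eq_zero.mp (by rw [← norm_perp, ← ha, ← hA, hc, norm_zero]))
  set r := ‖A‖ with hr
  have hr0 : 0 < r := norm_pos_iff.mpr hAne
  set ip : ℝ := inner ℝ A B with hip
  -- derivative of perturbed curve
  have hderiv_pert : ∀ t : ℝ, deriv (fun s => z s + t • h s) φ = a + t • b := by
    intro t
    have h1 : HasDerivAt (fun s => z s + t • h s) (deriv z φ + t • deriv h φ) φ :=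
      ((hz.differentiable two_ne_zero φ).hasDerivAt).add
        (((hh.differentiable two_ne_zero φ).hasDerivAt).const_smul t)
    exact h1.deriv
  -- scalar coefficient functions
  have hc : ∀ i : Fin 2, HasDerivAt (fun t : ℝ => ‖A + t • B‖⁻¹ * ((A + t • B) i))
      (-(ip / r) / r^2 * A i + r⁻¹ * B i) 0 := by
    intro i
    have hn := hasDerivAt_norm_line A B hAne
    have hninv : HasDerivAt (fun t : ℝ => ‖A + t • B‖⁻¹) (-(ip / r) / (‖A + (0:ℝ) • B‖)^2) 0 :=
      hn.inv (by simp [hr0.ne', hAne])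
    have haff : HasDerivAt (fun t : ℝ => (A + t • B) i) (B i) 0 := by
      have : (fun t : ℝ => (A + t • B) i) = fun t => A i + t * B i := by
        funext t; simp [PiLp.add_apply, PiLp.smul_apply, smul_eq_mul]
      rw [this]
      simpa using ((hasDerivAt_id (0:ℝ)).mul_const (B i)).const_add (A i)
    have := hninv.mul haff
    refine this.congr_deriv ?_
    simp [← hr]
    try ring
  -- complex side
  have hud : ∀ y, HasFDerivAt u (fderiv ℝ u y) y := fun y =>
    (hu.differentiable two_ne_zero y).hasFDerivAt
  have hu' : Differentiable ℝ (fderiv ℝ u) :=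
    (hu.fderiv_right (m := 1) (by norm_num)).differentiable one_ne_zero
  set f'' := fderiv ℝ (fderiv ℝ u) (z φ) with hf''def
  have hf'' : HasFDerivAt (fderiv ℝ u) f'' (z φ) := (hu' (z φ)).hasFDerivAt
  have hγ : HasDerivAt (fun t : ℝ => z φ + t • h φ) (h φ) 0 := by
    simpa using ((hasDerivAt_id (0:ℝ)).smul_const (h φ)).const_add (z φ)
  have hp : ∀ i : Fin 2, HasDerivAt (fun t : ℝ => partial1 u (z φ + t • h φ) i)
      (f'' (h φ) (EuclideanSpace.single i 1)) 0 := by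
    intro i
    have happ : HasFDerivAt (fun y => fderiv ℝ u y (EuclideanSpace.single i (1:ℝ)))
        ((ContinuousLinearMap.apply ℝ ℂ (EuclideanSpace.single i (1:ℝ))).comp f'') (z φ + (0:ℝ) • h φ) := by
      have : z φ + (0:ℝ) • h φ = z φ := by simp
      rw [this]
      exact (ContinuousLinearMap.apply ℝ ℂ (EuclideanSpace.single i (1:ℝ))).hasFDerivAt.comp (z φ) hf''
    have := happ.comp_hasDerivAt 0 hγ
    simpa [partial1, Function.comp_def] using this
  -- second partials identification
  have hpartial2 : ∀ i j : Fin 2, partial2 u (z φ) i j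
      = f'' (EuclideanSpace.single i 1) (EuclideanSpace.single j 1) := by
    intro i j
    have happ : HasFDerivAt (fun y => fderiv ℝ u y (EuclideanSpace.single j (1:ℝ)))
        ((ContinuousLinearMap.apply ℝ ℂ (EuclideanSpace.single j (1:ℝ))).comp f'') (z φ) :=
      (ContinuousLinearMap.apply ℝ ℂ (EuclideanSpace.single j (1:ℝ))).hasFDerivAt.comp (z φ) hf''
    rw [partial2, happ.fderiv]
    rfl
  have hsymm : ∀ v w, f'' v w = f'' w v := second_derivative_symmetric hud hf''
  -- the function equals the explicit sum
  have hfun : (fun t : ℝ => bdryOp u (fun s => z s + t • h s) φ)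
      = fun t : ℝ => ∑ i : Fin 2,
          (((‖A + t • B‖⁻¹ * ((A + t • B) i) : ℝ)) : ℂ) * partial1 u (z φ + t • h φ) i := by
    funext t
    rw [bdryOp]
    congr 1
    funext i
    congr 2
    · rw [curveNormal, hderiv_pert t, perp_add_smul, ← hA, ← hB, PiLp.smul_apply, smul_eq_mul]
  rw [hfun]
  -- total derivative
  have htot : HasDerivAt (fun t : ℝ => ∑ i : Fin 2,
      (((‖A + t • B‖⁻¹ * ((A + t • B) i) : ℝ)) : ℂ) * partial1 u (z φ + t • h φ) i)
      (∑ i : Fin 2,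
        ((((-(ip / r) / r^2 * A i + r⁻¹ * B i : ℝ)) : ℂ) * partial1 u (z φ + (0:ℝ) • h φ) i
        + (((‖A + (0:ℝ) • B‖⁻¹ * ((A + (0:ℝ) • B) i) : ℝ)) : ℂ) * (f'' (h φ) (EuclideanSpace.single i 1)))) 0 := by
    apply HasDerivAt.fun_sum
    intro i _
    exact ((hc i).ofReal_comp).mul (hp i)
  rw [Finset.sum_add_distrib] at htot
  convert htot using 2
  · apply Finset.sum_congr rfl
    intro i _
    congr 2
    · -- real coefficient equality
      push_cast
      have hnu : curveNormal z φ = r⁻¹ • A := by rw [curveNormal, ← ha, ← hA, ← hr]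
      have hnrm : ‖deriv z φ‖ = r := by rw [← ha, hr, hA, norm_perp]
      rw [hnu, hnrm]
      have hinner : (inner ℝ (r⁻¹ • A) B : ℝ) = r⁻¹ * ip := by
        rw [real_inner_smul_left, ← hip]
      rw [hinner]
      simp only [PiLp.smul_apply, PiLp.sub_apply, smul_eq_mul]
      field_simp
      ring
    · simp
  · apply Finset.sum_congr rfl
    intro i _
    congr 1
    · rw [curveNormal, ← ha, ← hA, ← hr]
      simp [PiLp.smul_apply, smul_eq_mul, hr]
    · -- f'' (h φ) eᵢ = ∑ j partial2 i j * h φ j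
      rw [show h φ = (h φ 0) • EuclideanSpace.single (0 : Fin 2) (1:ℝ)
            + (h φ 1) • EuclideanSpace.single (1 : Fin 2) (1:ℝ) from single_decomp (h φ)]
      rw [map_add, map_smul, map_smul]
      simp only [ContinuousLinearMap.add_apply, ContinuousLinearMap.coe_smul',
        Pi.smul_apply, Fin.sum_univ_two]
      rw [hpartial2 i 0, hpartial2 i 1, hsymm (EuclideanSpace.single i 1),
        hsymm (EuclideanSpace.single i 1)]
      simp [Complex.real_smul]
      ring
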